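/- Let A be a uniform algebra on a compact Hausdorff space Ω and let f ∈ C(Ω,ℝ) be strictly positive with f⁻² ∈ 𝒢. If there is a surjective isometric A-module isomorphism Af → A, then f ∈ Q (f = |g| for some invertible g ∈ A). If Af is almost A-isometric to A, then f ∈ Q̄⁺ (f is a uniform limit of moduli of invertible elements of A). -/

import Mathlib

open Filter

section Preamble

variable {Ω : Type*} [TopologicalSpace Ω] [CompactSpace Ω] [T2Space Ω]

/-- The evaluation functional at a point `x`, as a continuous linear functional on a
subspace `A` of `C(Ω, ℂ)`. -/
noncomputable def evalFunctional (A : Submodule ℂ C(Ω, ℂ)) (x : Ω) : A →L[ℂ] ℂ :=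
  LinearMap.mkContinuous
    { toFun := fun a => (a : C(Ω, ℂ)) x
      map_add' := fun a b => rfl
      map_smul' := fun c a => rfl } 1
    (fun a => by rw [one_mul]; exact (a : C(Ω, ℂ)).norm_coe_le_norm x)

/-- `x` is in the Choquet boundary of the subspace `A ⊆ C(Ω, ℂ)` iff the evaluation
functional at `x` is an extreme point of the closed unit ball of the dual space `A*`. -/
def InChoquet (A : Submodule ℂ C(Ω, ℂ)) (x : Ω) : Prop :=
  evalFunctional A x ∈ Set.extremePoints ℝ (Metric.closedBall (0 : A →L[ℂ] ℂ) 1)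

/-- A real-valued continuous function, viewed as a complex-valued continuous function. -/
noncomputable def ofRealCM (f : C(Ω, ℝ)) : C(Ω, ℂ) :=
  ⟨fun x => (f x : ℂ), Complex.continuous_ofReal.comp f.continuous⟩

/-- The submodule `A·f = {a·f : a ∈ A}` of `C(Ω, ℂ)`. -/
noncomputable def moduleAf (A : Subalgebra ℂ C(Ω, ℂ)) (f : C(Ω, ℝ)) : Submodule ℂ C(Ω, ℂ) :=
  (Subalgebra.toSubmodule A).map (LinearMap.mulRight ℂ (ofRealCM f))

/-- A map `S` between two `A`-submodules `X, Y` of `C(Ω, ℂ)` is an `A`-module map if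
`S(a·x) = a·S(x)` for all `a ∈ A`, `x ∈ X`. -/
def IsModuleMapOn (A : Subalgebra ℂ C(Ω, ℂ)) {X Y : Submodule ℂ C(Ω, ℂ)} (S : X → Y) : Prop :=
  ∀ (a : C(Ω, ℂ)), a ∈ A → ∀ (x : X) (h : a * (x : C(Ω, ℂ)) ∈ X),
    ((S ⟨a * (x : C(Ω, ℂ)), h⟩ : C(Ω, ℂ))) = a * ((S x : C(Ω, ℂ)))

/-- There is a surjective linear isometry from `X` onto `Y`. -/
def ExistsLinearIsometry (X Y : Submodule ℂ C(Ω, ℂ)) : Prop :=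
  ∃ S : X →ₗ[ℂ] Y, Function.Surjective S ∧ ∀ x, ‖S x‖ = ‖x‖

/-- There is a surjective isometric `A`-module isomorphism from `X` onto `Y`. -/
def ExistsModuleIsometry (A : Subalgebra ℂ C(Ω, ℂ)) (X Y : Submodule ℂ C(Ω, ℂ)) : Prop :=
  ∃ S : X →ₗ[ℂ] Y, Function.Surjective S ∧ (∀ x, ‖S x‖ = ‖x‖) ∧ IsModuleMapOn A S

/-- `X` and `Y` are almost isometric: for every `ε > 0` there is a bijective bounded
linear map `T : X → Y` with `‖T‖·‖T⁻¹‖ < 1 + ε`. -/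
def AlmostIsometric (X Y : Submodule ℂ C(Ω, ℂ)) : Prop :=
  ∀ ε : ℝ, 0 < ε → ∃ T : X ≃L[ℂ] Y,
    ‖T.toContinuousLinearMap‖ * ‖T.symm.toContinuousLinearMap‖ < 1 + ε

/-- `X` and `Y` are almost `A`-isometric: for every `ε > 0` there is a bijective bounded
`A`-module map `T : X → Y` with `‖T‖·‖T⁻¹‖ < 1 + ε`. -/
def AlmostAIsometric (A : Subalgebra ℂ C(Ω, ℂ)) (X Y : Submodule ℂ C(Ω, ℂ)) : Prop :=
  ∀ ε : ℝ, 0 < ε → ∃ T : X ≃L[ℂ] Y, IsModuleMapOn A T ∧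
    ‖T.toContinuousLinearMap‖ * ‖T.symm.toContinuousLinearMap‖ < 1 + ε

/-- `f ∈ Q`: `f = |g|` for an invertible element `g` of `A`. -/
def MemQ (A : Subalgebra ℂ C(Ω, ℂ)) (f : C(Ω, ℝ)) : Prop :=
  ∃ g ∈ A, (∃ g' ∈ A, g * g' = 1) ∧ ∀ x, f x = ‖g x‖

/-- `f ∈ Q̄`: `f` is a uniform limit on `Ω` of moduli of invertible elements of `A`. -/
def MemQbar (A : Subalgebra ℂ C(Ω, ℂ)) (f : C(Ω, ℝ)) : Prop :=
  ∃ g : ℕ → C(Ω, ℂ), (∀ n, g n ∈ A ∧ ∃ g' ∈ A, g n * g' = 1) ∧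
    TendstoUniformly (fun n x => ‖g n x‖) (fun x => f x) atTop

/-- `f ∈ 𝓜_A(Ω)`: there are sequences of `A`-tuples `Kₙ`, `Hₙ` with `Kₙ.Hₙ = 1`,
`‖Kₙ(w)‖₂ → f(w)` uniformly, and `‖Hₙ(w)‖₂ → f(w)⁻¹` uniformly on `Ω`. -/
def MemM (A : Subalgebra ℂ C(Ω, ℂ)) (f : C(Ω, ℝ)) : Prop :=
  ∃ (n : ℕ → ℕ) (K H : (m : ℕ) → Fin (n m) → C(Ω, ℂ)),
    (∀ m i, K m i ∈ A) ∧ (∀ m i, H m i ∈ A) ∧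
    (∀ m (x : Ω), (∑ i, K m i x * H m i x) = 1) ∧
    TendstoUniformly (fun m x => Real.sqrt (∑ i, ‖K m i x‖ ^ 2))
      (fun x => f x) atTop ∧
    TendstoUniformly (fun m x => Real.sqrt (∑ i, ‖H m i x‖ ^ 2))
      (fun x => (f x)⁻¹) atTop

/-- The set `𝓕` of finite sums `Σᵢ |gᵢ|²` with `gᵢ ∈ A`. -/
def calF (A : Subalgebra ℂ C(Ω, ℂ)) : Set C(Ω, ℝ) :=
  {u | ∃ (n : ℕ) (g : Fin n → C(Ω, ℂ)), (∀ i, g i ∈ A) ∧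
    ∀ x, u x = ∑ i, ‖g i x‖ ^ 2}

end Preamble
section Helpers

variable {Ω : Type*} [TopologicalSpace Ω] [CompactSpace Ω]

lemma abs_apply_le_norm (g : C(Ω, ℂ)) (x : Ω) : ‖g x‖ ≤ ‖g‖ := by
  simpa using g.norm_coe_le_norm x

lemma ofRealCM_apply (f : C(Ω, ℝ)) (x : Ω) : ofRealCM f x = (f x : ℂ) := rfl

set_option maxHeartbeats 2000000 in
lemma key_upper (A : Subalgebra ℂ C(Ω, ℂ)) (f finv : C(Ω, ℝ)) (hf : ∀ x, 0 < f x)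
    (hfinv : ∀ x, finv x = (f x)⁻¹) (hf2 : finv ^ 2 ∈ closure (calF A))
    (g : C(Ω, ℂ)) (C : ℝ) (hC : 0 ≤ C)
    (hub : ∀ a ∈ A, ‖a * g‖ ≤ C * ‖a * ofRealCM f‖) :
    ∀ x, ‖g x‖ ≤ C * f x := by
  intro x₀
  set M : ℝ := ‖f‖ with hMdef
  have hfM : ∀ x, f x ≤ M := fun x => (le_abs_self _).trans (f.norm_coe_le_norm x)
  have hM0 : 0 < M := lt_of_lt_of_le (hf x₀) (hfM x₀)
  set s : ℝ := ‖g x₀‖ with hsdef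
  have hs0 : 0 ≤ s := norm_nonneg _
  -- the δ-approximate inequality
  have hδ : ∀ δ : ℝ, 0 < δ →
      s ^ 2 * ((f x₀)⁻¹ ^ 2 - δ) ≤ C ^ 2 * (1 + δ * M ^ 2) := by
    intro δ hδpos
    obtain ⟨u, hu_mem, hu_dist⟩ := Metric.mem_closure_iff.mp hf2 δ hδpos
    obtain ⟨n, h, hhA, hu⟩ := hu_mem
    have hpt : ∀ x, |(f x)⁻¹ ^ 2 - ∑ i, ‖h i x‖ ^ 2| ≤ δ := by
      intro x
      have h1 : dist ((finv ^ 2) x) (u x) ≤ dist (finv ^ 2) u :=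
        ContinuousMap.dist_apply_le_dist x
      have h2 : (finv ^ 2) x = (f x)⁻¹ ^ 2 := by simp [hfinv]
      rw [Real.dist_eq, h2, hu x] at h1
      exact h1.trans hu_dist.le
    set z : Fin n → ℂ := fun i => h i x₀ * g x₀ with hzdef
    set T : ℝ := ∑ i, ‖z i‖ ^ 2 with hTdef
    have hT0 : 0 ≤ T := Finset.sum_nonneg fun i _ => sq_nonneg _
    set a : C(Ω, ℂ) := ∑ i, (starRingEnd ℂ (z i)) • h i with hadef
    have haA : a ∈ A := sum_mem fun i _ => A.smul_mem (hhA i) _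
    have ha_apply : ∀ x, a x = ∑ i, (starRingEnd ℂ (z i)) * h i x := by
      intro x; simp [hadef]
    -- step 1 : T ≤ ‖a * g‖
    have hag : (a * g) x₀ = (T : ℂ) := by
      rw [ContinuousMap.mul_apply, ha_apply, Finset.sum_mul, hTdef]
      push_cast
      refine Finset.sum_congr rfl fun i _ => ?_
      have hz : (h i) x₀ * g x₀ = z i := rfl
      rw [mul_assoc, hz]
      have h1 : ((‖z i‖ : ℂ)) ^ 2 = ((‖z i‖ ^ 2 : ℝ) : ℂ) := by
        push_cast; ring
      rw [h1, Complex.sq_norm, Complex.normSq_eq_conj_mul_self]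
    have hT_le : T ≤ ‖a * g‖ := by
      have := abs_apply_le_norm (a * g) x₀
      rwa [hag, Complex.norm_real, Real.norm_eq_abs, abs_of_nonneg hT0] at this
    -- step 2 : ‖a * f‖ ≤ √T * √(1 + δ M²)
    have hN : ‖a * ofRealCM f‖ ≤ Real.sqrt T * Real.sqrt (1 + δ * M ^ 2) := by
      refine (ContinuousMap.norm_le _ (by positivity)).mpr fun x => ?_
      have hx1 : ‖(a * ofRealCM f) x‖ = ‖a x‖ * f x := by
        rw [ContinuousMap.mul_apply, ofRealCM_apply, norm_mul,
          Complex.norm_real, Real.norm_eq_abs, abs_of_pos (hf x)]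
      rw [hx1]
      have hCS : ‖a x‖ ≤
          Real.sqrt T * Real.sqrt (∑ i, ‖h i x‖ ^ 2) := by
        rw [ha_apply]
        calc ‖∑ i, (starRingEnd ℂ (z i)) * h i x‖
            ≤ ∑ i, ‖(starRingEnd ℂ (z i)) * h i x‖ := by
              simpa using norm_sum_le Finset.univ
                (fun i => (starRingEnd ℂ (z i)) * h i x)
          _ = ∑ i, ‖z i‖ * ‖h i x‖ := by
              simp
          _ ≤ Real.sqrt (∑ i, ‖z i‖ ^ 2) *
              Real.sqrt (∑ i, ‖h i x‖ ^ 2) :=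
              Real.sum_mul_le_sqrt_mul_sqrt _ _ _
      have hsum_le : (∑ i, ‖h i x‖ ^ 2) ≤ (f x)⁻¹ ^ 2 + δ := by
        have := hpt x
        rw [abs_le] at this
        linarith [this.1]
      have hstep : Real.sqrt (∑ i, ‖h i x‖ ^ 2) * f x ≤
          Real.sqrt (1 + δ * M ^ 2) := by
        have hfx : 0 < f x := hf x
        rw [← Real.sqrt_sq hfx.le, ← Real.sqrt_mul
          (Finset.sum_nonneg fun i _ => sq_nonneg _)]
        apply Real.sqrt_le_sqrt
        have h1 : (∑ i, ‖h i x‖ ^ 2) * f x ^ 2 ≤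
            ((f x)⁻¹ ^ 2 + δ) * f x ^ 2 :=
          mul_le_mul_of_nonneg_right hsum_le (sq_nonneg _)
        have h2 : ((f x)⁻¹ ^ 2 + δ) * f x ^ 2 = 1 + δ * f x ^ 2 := by
          field_simp
        have h3 : f x ^ 2 ≤ M ^ 2 := by nlinarith [hf x, hfM x]
        nlinarith
      calc ‖a x‖ * f x
          ≤ (Real.sqrt T * Real.sqrt (∑ i, ‖h i x‖ ^ 2)) * f x :=
            mul_le_mul_of_nonneg_right hCS (hf x).le
        _ = Real.sqrt T * (Real.sqrt (∑ i, ‖h i x‖ ^ 2) * f x) := by ring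
        _ ≤ Real.sqrt T * Real.sqrt (1 + δ * M ^ 2) :=
            mul_le_mul_of_nonneg_left hstep (Real.sqrt_nonneg _)
    -- step 3 : T ≤ C² (1 + δ M²)
    have hTbound : T ≤ C ^ 2 * (1 + δ * M ^ 2) := by
      have h1 : T ≤ C * (Real.sqrt T * Real.sqrt (1 + δ * M ^ 2)) :=
        hT_le.trans ((hub a haA).trans (mul_le_mul_of_nonneg_left hN hC))
      have h3 : (0:ℝ) ≤ 1 + δ * M ^ 2 := by positivity
      nlinarith [Real.sq_sqrt hT0, Real.sq_sqrt h3, Real.sqrt_nonneg T,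
        Real.sqrt_nonneg (1 + δ * M ^ 2),
        sq_nonneg (Real.sqrt T - C * Real.sqrt (1 + δ * M ^ 2))]
    -- step 4 : lower bound for T
    have hTeq : T = (∑ i, ‖h i x₀‖ ^ 2) * s ^ 2 := by
      rw [hTdef, Finset.sum_mul]
      refine Finset.sum_congr rfl fun i _ => ?_
      rw [hzdef]; rw [norm_mul, mul_pow]
    have hlow : (f x₀)⁻¹ ^ 2 - δ ≤ ∑ i, ‖h i x₀‖ ^ 2 := by
      have := hpt x₀
      rw [abs_le] at this
      linarith [this.2]
    calc s ^ 2 * ((f x₀)⁻¹ ^ 2 - δ) ≤ s ^ 2 * (∑ i, ‖h i x₀‖ ^ 2) :=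
          mul_le_mul_of_nonneg_left hlow (sq_nonneg _)
      _ = T := by rw [hTeq]; ring
      _ ≤ C ^ 2 * (1 + δ * M ^ 2) := hTbound
  -- pass to the limit δ → 0
  have hmain : s ^ 2 * (f x₀)⁻¹ ^ 2 ≤ C ^ 2 := by
    refine le_of_forall_pos_le_add fun ε hε => ?_
    set K : ℝ := C ^ 2 * M ^ 2 + s ^ 2 with hKdef
    have hK0 : 0 ≤ K := by positivity
    have hδ1 := hδ (ε / (K + 1)) (by positivity)
    have hδK : ε / (K + 1) * K ≤ ε := by
      rw [div_mul_eq_mul_div, div_le_iff₀ (by positivity)]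
      nlinarith
    nlinarith
  have hfx : 0 < f x₀ := hf x₀
  have h1 : s ^ 2 ≤ C ^ 2 * f x₀ ^ 2 := by
    have hb : ((f x₀)⁻¹) ^ 2 * f x₀ ^ 2 = 1 := by field_simp
    calc s ^ 2 = s ^ 2 * (((f x₀)⁻¹) ^ 2 * f x₀ ^ 2) := by rw [hb, mul_one]
      _ = (s ^ 2 * ((f x₀)⁻¹) ^ 2) * f x₀ ^ 2 := by ring
      _ ≤ C ^ 2 * f x₀ ^ 2 := mul_le_mul_of_nonneg_right hmain (sq_nonneg _)
  have h2 : 0 ≤ C * f x₀ := mul_nonneg hC hfx.le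
  calc s = Real.sqrt (s ^ 2) := (Real.sqrt_sq hs0).symm
    _ ≤ Real.sqrt ((C * f x₀) ^ 2) := Real.sqrt_le_sqrt (by nlinarith)
    _ = C * f x₀ := Real.sqrt_sq h2

end Helpers
section Helpers2

variable {Ω : Type*} [TopologicalSpace Ω] [CompactSpace Ω]

lemma lower_bound (f : C(Ω, ℝ)) (hf : ∀ x, 0 < f x) (g a₀ : C(Ω, ℂ))
    (hinv : a₀ * g = 1) (C₂ : ℝ) (hb : ‖a₀ * ofRealCM f‖ ≤ C₂) :
    ∀ x, f x ≤ C₂ * ‖g x‖ := by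
  intro x
  have h1 : ‖a₀ x‖ * f x ≤ C₂ := by
    have h := abs_apply_le_norm (a₀ * ofRealCM f) x
    rw [ContinuousMap.mul_apply, norm_mul, ofRealCM_apply, Complex.norm_real,
      Real.norm_eq_abs, abs_of_pos (hf x)] at h
    exact h.trans hb
  have h2 : a₀ x * g x = 1 := by
    have := congrArg (fun c : C(Ω, ℂ) => c x) hinv
    simpa using this
  have h3 : ‖a₀ x‖ * ‖g x‖ = 1 := by
    rw [← norm_mul, h2, norm_one]
  calc f x = f x * (‖a₀ x‖ * ‖g x‖) := by rw [h3, mul_one]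
    _ = (‖a₀ x‖ * f x) * ‖g x‖ := by ring
    _ ≤ C₂ * ‖g x‖ :=
        mul_le_mul_of_nonneg_right h1 (norm_nonneg _)

end Helpers2

set_option maxHeartbeats 2000000 in
theorem stmt_14 {Ω : Type*} [TopologicalSpace Ω] [CompactSpace Ω] [T2Space Ω]
    (A : Subalgebra ℂ C(Ω, ℂ))
    (hclosed : IsClosed (A : Set C(Ω, ℂ)))
    (hsep : ∀ x y : Ω, x ≠ y → ∃ a ∈ A, a x ≠ a y)
    (f : C(Ω, ℝ)) (hf : ∀ x, 0 < f x)
    (finv : C(Ω, ℝ)) (hfinv : ∀ x, finv x = (f x)⁻¹)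
    (hf2 : finv ^ 2 ∈ closure (calF A)) :
    (ExistsModuleIsometry A (moduleAf A f) (Subalgebra.toSubmodule A) → MemQ A f) ∧
    (AlmostAIsometric A (moduleAf A f) (Subalgebra.toSubmodule A) → MemQbar A f) := by
  rcases isEmpty_or_nonempty Ω with hΩ | hΩ
  · constructor
    · intro _
      exact ⟨1, A.one_mem, ⟨1, A.one_mem, one_mul 1⟩, fun x => isEmptyElim x⟩
    · intro _
      refine ⟨fun _ => 1, fun n => ⟨A.one_mem, 1, A.one_mem, one_mul 1⟩, ?_⟩
      intro u hu
      exact Filter.Eventually.of_forall fun n x => isEmptyElim x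
  · set F : C(Ω, ℂ) := ofRealCM f with hFdef
    have hF : F ∈ moduleAf A f := ⟨1, A.one_mem, by simp [hFdef]⟩
    have haF : ∀ a : C(Ω, ℂ), a ∈ A → a * F ∈ moduleAf A f := fun a ha => ⟨a, ha, by simp [hFdef]⟩
    have hone : (1 : C(Ω, ℂ)) ∈ Subalgebra.toSubmodule A := A.one_mem
    constructor
    · rintro ⟨S, hsurj, hiso, hmod⟩
      set g : C(Ω, ℂ) := (S ⟨F, hF⟩ : C(Ω, ℂ)) with hgdef
      have hgA : g ∈ A := (S ⟨F, hF⟩).2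
      have hSa : ∀ a : C(Ω, ℂ), ∀ ha : a ∈ A,
          ((S ⟨a * F, haF a ha⟩ : C(Ω, ℂ))) = a * g := fun a ha =>
        hmod a ha ⟨F, hF⟩ (haF a ha)
      have hub : ∀ a ∈ A, ‖a * g‖ ≤ 1 * ‖a * F‖ := by
        intro a ha
        have h2 := hSa a ha
        have heq : ‖a * g‖ = ‖a * F‖ :=
          calc ‖a * g‖ = ‖S ⟨a * F, haF a ha⟩‖ := by rw [← h2]; rfl
            _ = ‖(⟨a * F, haF a ha⟩ : moduleAf A f)‖ := hiso _
            _ = ‖a * F‖ := rfl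
        rw [one_mul]
        exact heq.le
      obtain ⟨x, hx⟩ := hsurj ⟨1, hone⟩
      obtain ⟨a₀, ha₀, hx'⟩ := x.2
      have ha₀A : a₀ ∈ A := ha₀
      have hxa : (x : C(Ω, ℂ)) = a₀ * F := by
        rw [← hx']; simp [hFdef]
      have hxeq : x = ⟨a₀ * F, haF a₀ ha₀A⟩ := Subtype.ext hxa
      have h1 : a₀ * g = 1 := by
        have h2 := hSa a₀ ha₀A
        rw [← hxeq, hx] at h2
        exact h2.symm
      have hlb : ‖a₀ * F‖ ≤ 1 := le_of_eq <|
        calc ‖a₀ * F‖ = ‖(⟨a₀ * F, haF a₀ ha₀A⟩ : moduleAf A f)‖ := rfl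
          _ = ‖S ⟨a₀ * F, haF a₀ ha₀A⟩‖ := (hiso _).symm
          _ = ‖(1 : C(Ω, ℂ))‖ := by rw [← hxeq, hx]; rfl
          _ = 1 := norm_one
      have hup := key_upper A f finv hf hfinv hf2 g 1 zero_le_one hub
      have hlow := lower_bound f hf g a₀ h1 1 hlb
      refine ⟨g, hgA, ⟨a₀, ha₀A, by rw [mul_comm]; exact h1⟩, fun x => ?_⟩
      have := hup x
      have := hlow x
      have := (hf x).le
      apply le_antisymm <;> linarith
    · intro hA
      set M : ℝ := ‖f‖ with hMdef
      have hfM : ∀ x, f x ≤ M := fun x => (le_abs_self _).trans (f.norm_coe_le_norm x)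
      have hM0 : 0 < M := lt_of_lt_of_le (hf hΩ.some) (hfM hΩ.some)
      have key : ∀ m : ℕ, ∃ g : C(Ω, ℂ), (g ∈ A ∧ ∃ g' ∈ A, g * g' = 1) ∧
          ∀ x, dist (f x) (‖g x‖) ≤ M * (1 / (m + 1)) := by
        intro m
        have hεpos : (0 : ℝ) < 1 / (m + 1) := by positivity
        obtain ⟨T, hmod, hprod⟩ := hA (1 / (m + 1)) hεpos
        set C₁ := ‖T.toContinuousLinearMap‖ with hC₁def
        set C₂ := ‖T.symm.toContinuousLinearMap‖ with hC₂def
        have hC₁0 : 0 ≤ C₁ := by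
          rw [hC₁def]; exact ContinuousLinearMap.opNorm_nonneg _
        have hC₂0 : 0 ≤ C₂ := by
          rw [hC₂def]; exact ContinuousLinearMap.opNorm_nonneg _
        set g : C(Ω, ℂ) := (T ⟨F, hF⟩ : C(Ω, ℂ)) with hgdef
        have hgA : g ∈ A := (T ⟨F, hF⟩).2
        have hTa : ∀ a : C(Ω, ℂ), ∀ ha : a ∈ A,
            ((T ⟨a * F, haF a ha⟩ : C(Ω, ℂ))) = a * g := fun a ha =>
          hmod a ha ⟨F, hF⟩ (haF a ha)
        have hub : ∀ a ∈ A, ‖a * g‖ ≤ C₁ * ‖a * F‖ := by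
          intro a ha
          have h2 := hTa a ha
          calc ‖a * g‖ = ‖T ⟨a * F, haF a ha⟩‖ := by rw [← h2]; rfl
            _ = ‖T.toContinuousLinearMap ⟨a * F, haF a ha⟩‖ := rfl
            _ ≤ C₁ * ‖(⟨a * F, haF a ha⟩ : moduleAf A f)‖ :=
                T.toContinuousLinearMap.le_opNorm _
            _ = C₁ * ‖a * F‖ := rfl
        have hup := key_upper A f finv hf hfinv hf2 g C₁ hC₁0 hub
        obtain ⟨x, hx⟩ := T.surjective ⟨1, hone⟩
        obtain ⟨a₀, ha₀, hx'⟩ := x.2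
        have ha₀A : a₀ ∈ A := ha₀
        have hxa : (x : C(Ω, ℂ)) = a₀ * F := by rw [← hx']; simp [hFdef]
        have hxeq : x = ⟨a₀ * F, haF a₀ ha₀A⟩ := Subtype.ext hxa
        have h1 : a₀ * g = 1 := by
          have h2 := hTa a₀ ha₀A
          rw [← hxeq, hx] at h2
          exact h2.symm
        have hlbn : ‖a₀ * F‖ ≤ C₂ := by
          have hsy : T.symm ⟨1, hone⟩ = x := by
            rw [← hx, ContinuousLinearEquiv.symm_apply_apply]
          calc ‖a₀ * F‖ = ‖(⟨a₀ * F, haF a₀ ha₀A⟩ : moduleAf A f)‖ := rfl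
            _ = ‖T.symm ⟨1, hone⟩‖ := by rw [hsy, hxeq]
            _ = ‖T.symm.toContinuousLinearMap ⟨1, hone⟩‖ := rfl
            _ ≤ C₂ * ‖(⟨1, hone⟩ : Subalgebra.toSubmodule A)‖ :=
                T.symm.toContinuousLinearMap.le_opNorm _
            _ = C₂ * ‖(1 : C(Ω, ℂ))‖ := rfl
            _ = C₂ := by rw [norm_one, mul_one]
        have hlow := lower_bound f hf g a₀ h1 C₂ hlbn
        have hC₂pos : 0 < C₂ := by
          have h2 := hlow hΩ.some
          nlinarith [hf hΩ.some, norm_nonneg (g hΩ.some)]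
        have hC₂ne : ((C₂ : ℂ)) ≠ 0 := by
          exact_mod_cast (Complex.ofReal_ne_zero).mpr hC₂pos.ne'
        refine ⟨(C₂ : ℂ) • g, ⟨A.smul_mem hgA _, (C₂ : ℂ)⁻¹ • a₀, A.smul_mem ha₀A _, ?_⟩, ?_⟩
        · ext x
          have hpt : a₀ x * g x = 1 := by
            have := congrArg (fun c : C(Ω, ℂ) => c x) h1
            simpa using this
          simp only [ContinuousMap.mul_apply, ContinuousMap.smul_apply, smul_eq_mul,
            ContinuousMap.one_apply]
          rw [mul_mul_mul_comm, mul_inv_cancel₀ hC₂ne, one_mul, mul_comm]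
          exact hpt
        · intro x
          have habs : ‖((C₂ : ℂ) • g) x‖ = C₂ * ‖g x‖ := by
            rw [ContinuousMap.smul_apply]
            simp [abs_of_pos hC₂pos]
          rw [Real.dist_eq, habs]
          have h1x : f x ≤ C₂ * ‖g x‖ := hlow x
          have h2x : C₂ * ‖g x‖ ≤ C₁ * C₂ * f x := by
            nlinarith [hup x, hC₂0]
          have h3x : C₁ * C₂ ≤ 1 + 1 / (m + 1) := hprod.le
          rw [abs_sub_comm, abs_of_nonneg (by linarith)]
          have h4x : C₂ * ‖g x‖ - f x ≤ (1 / (m + 1)) * f x := by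
            nlinarith [hf x]
          calc C₂ * ‖g x‖ - f x ≤ (1 / (m + 1)) * f x := h4x
            _ ≤ (1 / (m + 1)) * M := by nlinarith [hfM x]
            _ = M * (1 / (m + 1)) := by ring
      choose gs hginv hgdist using key
      refine ⟨gs, hginv, ?_⟩
      rw [Metric.tendstoUniformly_iff]
      intro ε hε
      obtain ⟨N, hN⟩ := exists_nat_gt (M / ε)
      filter_upwards [eventually_ge_atTop N] with m hm x
      have h1 := hgdist m x
      have hm1 : (N : ℝ) + 1 ≤ (m : ℝ) + 1 := by
        have : (N : ℝ) ≤ m := Nat.cast_le.mpr hm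
        linarith
      have h3 : M * (1 / ((m : ℝ) + 1)) ≤ M * (1 / ((N : ℝ) + 1)) := by
        apply mul_le_mul_of_nonneg_left _ hM0.le
        apply one_div_le_one_div_of_le (by positivity) hm1
      have h4 : M * (1 / ((N : ℝ) + 1)) < ε := by
        rw [mul_one_div, div_lt_iff₀ (by positivity)]
        rw [div_lt_iff₀ hε] at hN
        nlinarith
      calc dist (f x) (‖gs m x‖) ≤ M * (1 / (m + 1)) := h1
        _ ≤ M * (1 / ((N : ℝ) + 1)) := h3
        _ < ε := h4
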